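/- arXiv:2511.18190 — 4 statements merged into one kernel-verified Lean document; each statement's English description precedes it below -/
import Mathlib

section
/- Let F : ℂ^n → ℂ^n be an entire holomorphic map and let K ⊆ ℂ^n be a compact polynomially convex set such that F^{-1}(K) is compact. Then F^{-1}(K) is polynomially convex. -/
open Complex Metric

noncomputable section

open Finset

/-- A compact set `K ⊆ ℂⁿ` is polynomially convex. -/
def IsPolyConvex {n : ℕ} (K : Set (Fin n → ℂ)) : Prop :=
  ∀ w : Fin n → ℂ, w ∉ K → ∃ P : MvPolynomial (Fin n) ℂ,
    ∀ z ∈ K, ‖MvPolynomial.eval z P‖ < ‖MvPolynomial.eval w P‖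

lemma diffEval {m : ℕ} (P : MvPolynomial (Fin m) ℂ) :
    Differentiable ℂ (fun z : Fin m → ℂ => MvPolynomial.eval z P) := by
  induction P using MvPolynomial.induction_on with
  | C a => simpa using differentiable_const a
  | add p q hp hq => simp only [map_add]; exact hp.add hq
  | mul_X p i hp =>
      simp only [map_mul, MvPolynomial.eval_X]; exact hp.mul (differentiable_pi.mp differentiable_id i)

lemma diffCons {n : ℕ} {g : (Fin (n+1) → ℂ) → ℂ} (hg : Differentiable ℂ g) (a : ℂ) :
    Differentiable ℂ (fun y : Fin n → ℂ => g (Fin.cons a y)) := by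
  apply hg.comp
  rw [differentiable_pi]
  intro i
  refine Fin.cases ?_ ?_ i
  · simpa using differentiable_const a
  · intro j; simpa using differentiable_pi.mp differentiable_id j

lemma diffConsFst {n : ℕ} {g : (Fin (n+1) → ℂ) → ℂ} (hg : Differentiable ℂ g) (y : Fin n → ℂ) :
    Differentiable ℂ (fun t : ℂ => g (Fin.cons t y)) := by
  apply hg.comp
  rw [differentiable_pi]
  intro i
  refine Fin.cases ?_ ?_ i
  · simpa using differentiable_id
  · intro j; simpa using differentiable_const (y j)

lemma oneVar (h : ℂ → ℂ) (hd : Differentiable ℂ h) (σ : ℝ) (hσ : 0 < σ) (M : ℝ)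
    (hM : ∀ ζ : ℂ, ‖ζ‖ = σ → ‖h ζ‖ ≤ M) :
    ∃ a : ℕ → ℂ, (∀ z : ℂ, HasSum (fun p => a p * z ^ p) (h z)) ∧
      ∀ p, ‖a p‖ ≤ M / σ ^ p := by
  lift σ to NNReal using hσ.le with σ' hσ'
  subst hσ'
  have hσ0 : (0 : NNReal) < σ' := by exact_mod_cast hσ
  have H := hd.hasFPowerSeriesOnBall 0 hσ0
  set ps := cauchyPowerSeries h 0 σ' with hps
  refine ⟨fun p => ps p (fun _ => 1), fun z => ?_, fun p => ?_⟩
  · have hz : z ∈ EMetric.ball (0 : ℂ) ⊤ := EMetric.mem_ball.mpr (edist_lt_top _ _)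
    have := H.hasSum (y := z) (by simpa using hz)
    simp only [zero_add] at this
    convert this using 2 with p
    case e'_3 => rfl
    have : (fun _ : Fin p => z) = fun _ : Fin p => z • (1:ℂ) := by simp
    rw [this, (ps p).map_smul_univ]
    simp [mul_comm]
  · have h1 : ‖ps p (fun _ => 1)‖ ≤ ‖ps p‖ * ∏ _i : Fin p, ‖(1:ℂ)‖ :=
      (ps p).le_opNorm _
    simp only [norm_one, Finset.prod_const_one, mul_one] at h1
    have h2 := norm_cauchyPowerSeries_le h 0 σ' p
    have h3 : (∫ θ : ℝ in (0)..2 * Real.pi, ‖h (circleMap 0 σ' θ)‖) ≤ 2 * Real.pi * M := by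
      have hint : IntervalIntegrable (fun θ : ℝ => ‖h (circleMap 0 σ' θ)‖) MeasureTheory.volume 0 (2*Real.pi) :=
        ((hd.continuous.comp (continuous_circleMap 0 σ')).norm).intervalIntegrable _ _
      calc (∫ θ : ℝ in (0)..2 * Real.pi, ‖h (circleMap 0 σ' θ)‖)
          ≤ ∫ _θ : ℝ in (0)..2 * Real.pi, M := by
            apply intervalIntegral.integral_mono_on Real.two_pi_pos.le hint
              intervalIntegrable_const
            intro θ _
            apply hM
            rw [norm_circleMap_zero, abs_of_pos hσ]
        _ = 2 * Real.pi * M := by simp [mul_comm]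
    have hM0 : 0 ≤ M := le_trans (norm_nonneg _) (hM ((σ':ℝ):ℂ) (by simp [abs_of_pos hσ]))
    calc ‖ps p (fun _ => 1)‖ ≤ ‖ps p‖ := h1
      _ ≤ ((2 * Real.pi)⁻¹ * ∫ θ : ℝ in (0)..2 * Real.pi, ‖h (circleMap 0 σ' θ)‖) * |(σ':ℝ)|⁻¹ ^ p := h2
      _ ≤ ((2 * Real.pi)⁻¹ * (2 * Real.pi * M)) * |(σ':ℝ)|⁻¹ ^ p := by
          gcongr
      _ = M / (σ' : ℝ) ^ p := by
          have h4 : (2*Real.pi)⁻¹ * (2*Real.pi*M) = M := by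
            field_simp
          rw [h4, abs_of_pos hσ, inv_pow, ← div_eq_mul_inv]

lemma sample (k : ℕ) (hk : 0 < k) (r M : ℝ) (hr : 0 < r) (h : ℂ → ℂ)
    (hd : Differentiable ℂ h)
    (hM : ∀ ζ : ℂ, ‖ζ‖ = 2 * r → ‖h ζ‖ ≤ M) (z₀ : ℂ) (hz : ‖z₀‖ ≤ r) :
    ‖h z₀ - ∑ l ∈ range k, ∑ j ∈ range k,
        h (r * Complex.exp (2 * Real.pi * I / k) ^ l) *
          ((k : ℂ)⁻¹ * (Complex.exp (2 * Real.pi * I / k))⁻¹ ^ (j * l) * (z₀ / r) ^ j)‖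
      ≤ 4 * M * (1 / 2) ^ k := by
  set ω : ℂ := Complex.exp (2 * Real.pi * I / k) with hωdef
  have hω : IsPrimitiveRoot ω k := Complex.isPrimitiveRoot_exp k hk.ne'
  have hωk : ω ^ k = 1 := hω.pow_eq_one
  have hω0 : ω ≠ 0 := Complex.exp_ne_zero _
  have hωa : ‖ω‖ = 1 := by
    rw [hωdef]
    have : 2 * Real.pi * I / k = ((2 * Real.pi / k : ℝ) : ℂ) * I := by
      push_cast; ring
    rw [this, Complex.norm_exp_ofReal_mul_I]
  have hinj : ∀ j₁ j₂ : ℕ, j₁ < k → j₂ < k → ω ^ j₁ = ω ^ j₂ → j₁ = j₂ := by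
    intro j₁ j₂ h₁ h₂ he
    exact hω.pow_inj h₁ h₂ he
  have hM0 : 0 ≤ M := by
    refine le_trans (norm_nonneg (h (2 * r : ℝ))) (hM _ ?_)
    simp [abs_of_pos hr, abs_of_pos (by linarith : (0:ℝ) < 2*r)]
  have hr0 : (r : ℂ) ≠ 0 := by exact_mod_cast hr.ne'
  have hk0 : (k : ℂ) ≠ 0 := by exact_mod_cast hk.ne'
  -- power series
  obtain ⟨a, ha, hab⟩ := oneVar h hd (2 * r) (by linarith) M hM
  have habs : ∀ p, ‖a p‖ * r ^ p ≤ M * (1 / 2) ^ p := by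
    intro p
    have h1 : ‖a p‖ ≤ M / (2 * r) ^ p := hab p
    have h2 : ‖a p‖ * r ^ p ≤ M / (2 * r) ^ p * r ^ p :=
      mul_le_mul_of_nonneg_right h1 (by positivity)
    refine h2.trans (le_of_eq ?_)
    rw [mul_pow, div_pow, one_pow]
    field_simp
  -- the DFT sum
  have dft : ∀ p j : ℕ, (∑ l ∈ range k, (ω ^ p * ω⁻¹ ^ j) ^ l)
      = if ω ^ p = ω ^ j then (k : ℂ) else 0 := by
    intro p j
    by_cases he : ω ^ p = ω ^ j
    · rw [if_pos he]
      have h1 : ω ^ p * (ω ^ j)⁻¹ = 1 := by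
        rw [he, mul_inv_cancel₀ (pow_ne_zero _ hω0)]
      simp [inv_pow, h1]
    · rw [if_neg he]
      have hx : ω ^ p * ω⁻¹ ^ j ≠ 1 := by
        intro hc
        apply he
        have h2 : ω⁻¹ ^ j * ω ^ j = 1 := by
          rw [inv_pow, inv_mul_cancel₀ (pow_ne_zero _ hω0)]
        calc ω ^ p = ω ^ p * (ω⁻¹ ^ j * ω ^ j) := by rw [h2, mul_one]
          _ = ω ^ p * ω⁻¹ ^ j * ω ^ j := by ring
          _ = ω ^ j := by rw [hc, one_mul]
      rw [geom_sum_eq hx]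
      have hxk : (ω ^ p * ω⁻¹ ^ j) ^ k = 1 := by
        rw [mul_pow, ← pow_mul, ← pow_mul, mul_comm p k, mul_comm j k, pow_mul, pow_mul,
          hωk, inv_pow, hωk]
        simp
      rw [hxk]
      simp
  -- the sampled sum as a HasSum
  set B : ℂ := ∑ l ∈ range k, ∑ j ∈ range k,
      h (r * ω ^ l) * ((k : ℂ)⁻¹ * ω⁻¹ ^ (j * l) * (z₀ / r) ^ j) with hBdef
  set v : ℕ → ℂ := fun p => ∑ l ∈ range k, ∑ j ∈ range k,
      (a p * (r * ω ^ l) ^ p) * ((k : ℂ)⁻¹ * ω⁻¹ ^ (j * l) * (z₀ / r) ^ j) with hvdef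
  have hB : HasSum v B := by
    rw [hBdef, hvdef]
    refine hasSum_sum fun l _ => ?_
    refine hasSum_sum fun j _ => ?_
    exact (ha (r * ω ^ l)).mul_right _
  -- identify v p
  have key : ∀ p, v p = a p * r ^ p * (k : ℂ)⁻¹ *
      ∑ j ∈ range k, (z₀ / r) ^ j * (if ω ^ p = ω ^ j then (k : ℂ) else 0) := by
    intro p
    rw [hvdef]
    beta_reduce
    rw [Finset.sum_comm]
    simp only [← dft, Finset.mul_sum]
    refine Finset.sum_congr rfl fun j _ => ?_
    refine Finset.sum_congr rfl fun l _ => ?_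
    rw [mul_pow (↑r) (ω ^ l), mul_pow (ω ^ p), pow_mul ω⁻¹ j l,
      ← pow_mul ω l p, mul_comm l p, pow_mul ω p l]
    ring
  -- low coefficients are exact
  have hlow : ∀ p, p < k → v p = a p * z₀ ^ p := by
    intro p hp
    rw [key p]
    have hs : ∑ j ∈ range k, (z₀ / r) ^ j * (if ω ^ p = ω ^ j then (k:ℂ) else 0)
        = (z₀ / r) ^ p * k := by
      rw [Finset.sum_eq_single p]
      · rw [if_pos rfl]
      · intro j hj hne
        rw [if_neg, mul_zero]
        intro he
        exact hne (hinj j p (mem_range.mp hj) hp he.symm)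
      · intro hp'
        exact absurd (mem_range.mpr hp) hp'
    rw [hs, div_pow]
    field_simp
  -- high coefficients are bounded
  have hhigh : ∀ p, ‖v p‖ ≤ ‖a p‖ * r ^ p := by
    intro p
    set t := (range k).filter (fun j => ω ^ p = ω ^ j) with htdef
    have hsum : ∑ j ∈ range k, (z₀ / r) ^ j * (if ω ^ p = ω ^ j then (k:ℂ) else 0)
        = (k:ℂ) * ∑ j ∈ t, (z₀ / r) ^ j := by
      rw [Finset.mul_sum, htdef, Finset.sum_filter]
      refine Finset.sum_congr rfl fun j _ => ?_
      by_cases hc : ω ^ p = ω ^ j <;> simp [hc, mul_comm]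
    have hcard : t.card ≤ 1 := by
      rw [Finset.card_le_one]
      intro a1 h1 a2 h2
      simp only [htdef, Finset.mem_filter, Finset.mem_range] at h1 h2
      exact hinj a1 a2 h1.1 h2.1 (h1.2.symm.trans h2.2)
    have hzr : ‖z₀ / (r:ℂ)‖ ≤ 1 := by
      rw [norm_div]
      rw [div_le_one (by simpa [abs_of_pos hr] using hr)]
      simpa [abs_of_pos hr] using hz
    have hnorm : ‖∑ j ∈ t, (z₀ / (r:ℂ)) ^ j‖ ≤ 1 := by
      calc ‖∑ j ∈ t, (z₀ / (r:ℂ)) ^ j‖ ≤ ∑ j ∈ t, ‖(z₀ / (r:ℂ)) ^ j‖ := norm_sum_le _ _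
        _ ≤ ∑ _j ∈ t, 1 := Finset.sum_le_sum (fun j _ => by
              rw [norm_pow]; exact pow_le_one₀ (norm_nonneg _) hzr)
        _ = t.card := by simp
        _ ≤ 1 := by exact_mod_cast hcard
    have hvp : v p = a p * (r:ℂ) ^ p * ∑ j ∈ t, (z₀ / (r:ℂ)) ^ j := by
      rw [key p, hsum]
      field_simp
    rw [hvp]
    calc ‖a p * (r:ℂ) ^ p * ∑ j ∈ t, (z₀ / (r:ℂ)) ^ j‖
        = ‖a p‖ * ‖(r:ℂ) ^ p‖ * ‖∑ j ∈ t, (z₀ / (r:ℂ)) ^ j‖ := by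
          rw [norm_mul, norm_mul]
      _ ≤ ‖a p‖ * ‖(r:ℂ) ^ p‖ * 1 := by gcongr
      _ = ‖a p‖ * r ^ p := by
          rw [mul_one, norm_pow, Complex.norm_real, Real.norm_eq_abs, abs_of_pos hr]
  -- assemble
  set f : ℕ → ℂ := fun p => v p - a p * z₀ ^ p with hfdef
  have hgoal : HasSum f (B - h z₀) := hB.sub (ha z₀)
  have hf0 : ∀ p ∈ range k, f p = 0 := by
    intro p hp
    simp only [hfdef]
    rw [hlow p (mem_range.mp hp), sub_self]
  have hzb : ∀ p : ℕ, ‖a p * z₀ ^ p‖ ≤ ‖a p‖ * r ^ p := by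
    intro p
    rw [norm_mul, norm_pow]
    exact mul_le_mul_of_nonneg_left (pow_le_pow_left₀ (norm_nonneg _) hz p) (norm_nonneg _)
  have hfb : ∀ q : ℕ, ‖f (q + k)‖ ≤ 2 * M * (1/2) ^ k * (1/2) ^ q := by
    intro q
    calc ‖f (q + k)‖ ≤ ‖v (q + k)‖ + ‖a (q + k) * z₀ ^ (q + k)‖ := norm_sub_le _ _
      _ ≤ ‖a (q + k)‖ * r ^ (q + k) + ‖a (q + k)‖ * r ^ (q + k) :=
          add_le_add (hhigh _) (hzb _)
      _ = 2 * (‖a (q + k)‖ * r ^ (q + k)) := by ring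
      _ ≤ 2 * (M * (1/2) ^ (q + k)) := by
          exact mul_le_mul_of_nonneg_left (habs _) (by norm_num)
      _ = 2 * M * (1/2) ^ k * (1/2) ^ q := by
          rw [pow_add]; ring
  have hgs : Summable (fun q : ℕ => 2 * M * (1/2:ℝ) ^ k * (1/2) ^ q) :=
    (summable_geometric_of_lt_one (by norm_num) (by norm_num)).mul_left _
  have hns : Summable (fun q : ℕ => ‖f (q + k)‖) :=
    Summable.of_nonneg_of_le (fun q => norm_nonneg _) hfb hgs
  have hsf : Summable f := hgoal.summable
  have htail : B - h z₀ = ∑' q : ℕ, f (q + k) := by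
    rw [← hgoal.tsum_eq, ← Summable.sum_add_tsum_nat_add k hsf, Finset.sum_eq_zero hf0, zero_add]
  have : ‖B - h z₀‖ ≤ 4 * M * (1/2) ^ k := by
    rw [htail]
    calc ‖∑' q : ℕ, f (q + k)‖ ≤ ∑' q : ℕ, ‖f (q + k)‖ := norm_tsum_le_tsum_norm hns
      _ ≤ ∑' q : ℕ, 2 * M * (1/2:ℝ) ^ k * (1/2) ^ q := Summable.tsum_le_tsum hfb hns hgs
      _ = 2 * M * (1/2:ℝ) ^ k * ∑' q : ℕ, (1/2:ℝ) ^ q := tsum_mul_left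
      _ = 4 * M * (1/2) ^ k := by
          rw [tsum_geometric_of_lt_one (by norm_num) (by norm_num)]
          norm_num
          ring
  rw [norm_sub_rev]
  exact this

lemma approx (n : ℕ) : ∀ (g : (Fin n → ℂ) → ℂ), Differentiable ℂ g → ∀ r : ℝ, 0 < r →
    ∀ ε : ℝ, 0 < ε → ∃ Q : MvPolynomial (Fin n) ℂ, ∀ x : Fin n → ℂ,
      (∀ i, ‖x i‖ ≤ r) → ‖g x - MvPolynomial.eval x Q‖ ≤ ε := by
  induction n with
  | zero =>
    intro g hg r hr ε hε
    refine ⟨MvPolynomial.C (g (fun i => i.elim0)), fun x hx => ?_⟩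
    have hxe : x = fun i => i.elim0 := funext fun i => i.elim0
    rw [MvPolynomial.eval_C, hxe, sub_self]
    simpa using hε.le
  | succ n IH =>
    intro g hg r hr ε hε
    obtain ⟨M, hM⟩ := (isCompact_closedBall (0 : Fin (n+1) → ℂ)
        (2*r)).exists_bound_of_continuousOn hg.continuous.continuousOn
    have hM0 : 0 ≤ M := le_trans (norm_nonneg _) (hM 0 (mem_closedBall_self (by linarith)))
    obtain ⟨k₀, hk₀⟩ := exists_pow_lt_of_lt_one
      (show (0:ℝ) < ε/2/(4*M+1) by positivity) (by norm_num : (1/2 : ℝ) < 1)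
    set k := k₀ + 1 with hkdef
    have hk : 0 < k := Nat.succ_pos _
    have hkR : (0:ℝ) < k := by exact_mod_cast hk
    have hkb : 4 * M * (1/2:ℝ)^k ≤ ε/2 := by
      have h1 : (1/2:ℝ)^k ≤ (1/2:ℝ)^k₀ :=
        pow_le_pow_of_le_one (by norm_num) (by norm_num) (Nat.le_succ _)
      have h2 : 4 * M * (1/2:ℝ)^k ≤ 4 * M * (ε/2/(4*M+1)) := by
        apply mul_le_mul_of_nonneg_left (h1.trans hk₀.le) (by positivity)
      refine h2.trans ?_
      rw [mul_div_assoc']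
      rw [div_le_iff₀ (by positivity)]
      ring_nf
      nlinarith [hε.le, hM0]
    set ω : ℂ := Complex.exp (2 * Real.pi * I / k) with hωdef
    have hωa : ‖ω‖ = 1 := by
      rw [hωdef]
      have : 2 * (Real.pi:ℂ) * I / k = ((2 * Real.pi / k : ℝ) : ℂ) * I := by
        push_cast; ring
      rw [this, Complex.norm_exp_ofReal_mul_I]
    choose P hP using fun l : ℕ =>
      IH (fun y : Fin n → ℂ => g (Fin.cons ((r:ℂ) * ω ^ l) y)) (diffCons hg _)
        r hr (ε/2/k) (by positivity)
    set Q : MvPolynomial (Fin (n+1)) ℂ :=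
      ∑ l ∈ range k, ∑ j ∈ range k,
        MvPolynomial.C ((k:ℂ)⁻¹ * ω⁻¹ ^ (j*l) * ((r:ℂ)⁻¹) ^ j) * (MvPolynomial.X 0) ^ j *
          MvPolynomial.rename Fin.succ (P l) with hQdef
    refine ⟨Q, fun x hx => ?_⟩
    set y : Fin n → ℂ := Fin.tail x with hydef
    have hy : ∀ i, ‖y i‖ ≤ r := by
      intro i
      simpa [hydef, Fin.tail] using hx i.succ
    have hevalQ : MvPolynomial.eval x Q = ∑ l ∈ range k, ∑ j ∈ range k,
        (MvPolynomial.eval y (P l)) * ((k:ℂ)⁻¹ * ω⁻¹ ^ (j*l) * (x 0 / r) ^ j) := by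
      rw [hQdef]
      rw [map_sum]
      refine Finset.sum_congr rfl fun l _ => ?_
      rw [map_sum]
      refine Finset.sum_congr rfl fun j _ => ?_
      rw [map_mul, map_mul, MvPolynomial.eval_C, map_pow, MvPolynomial.eval_X,
        MvPolynomial.eval_rename]
      have hcomp : x ∘ Fin.succ = y := rfl
      rw [hcomp, div_pow]
      field_simp
      ring
    -- apply the sampling lemma
    have hcons : Fin.cons (x 0) y = x := Fin.cons_self_tail x
    have hMb : ∀ ζ : ℂ, ‖ζ‖ = 2 * r → ‖g (Fin.cons ζ y)‖ ≤ M := by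
      intro ζ hζ
      apply hM
      rw [mem_closedBall_zero_iff]
      rw [pi_norm_le_iff_of_nonneg (by linarith)]
      intro i
      refine Fin.cases ?_ ?_ i
      · simpa using hζ.le
      · intro j
        simpa using (hy j).trans (by linarith)
    have hsamp := sample k hk r M hr (fun t => g (Fin.cons t y)) (diffConsFst hg y)
      hMb (x 0) (hx 0)
    rw [← hωdef] at hsamp
    simp only [hcons] at hsamp
    -- compare sampled sum with the polynomial
    set S : ℂ := ∑ l ∈ range k, ∑ j ∈ range k,
        g (Fin.cons ((r:ℂ) * ω ^ l) y) * ((k:ℂ)⁻¹ * ω⁻¹ ^ (j*l) * (x 0 / r) ^ j) with hSdef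
    have hS : ‖S - MvPolynomial.eval x Q‖ ≤ ε/2 := by
      have hdiff : S - MvPolynomial.eval x Q = ∑ l ∈ range k, ∑ j ∈ range k,
          (g (Fin.cons ((r:ℂ) * ω ^ l) y) - MvPolynomial.eval y (P l)) *
            ((k:ℂ)⁻¹ * ω⁻¹ ^ (j*l) * (x 0 / r) ^ j) := by
        rw [hSdef, hevalQ, ← Finset.sum_sub_distrib]
        refine Finset.sum_congr rfl fun l _ => ?_
        rw [← Finset.sum_sub_distrib]
        refine Finset.sum_congr rfl fun j _ => ?_
        ring
      rw [hdiff]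
      have hterm : ∀ l ∈ range k, ∀ j ∈ range k,
          ‖(g (Fin.cons ((r:ℂ) * ω ^ l) y) - MvPolynomial.eval y (P l)) *
            ((k:ℂ)⁻¹ * ω⁻¹ ^ (j*l) * (x 0 / r) ^ j)‖ ≤ (ε/2/k) * (k:ℝ)⁻¹ := by
        intro l _ j _
        rw [norm_mul]
        have h1 : ‖g (Fin.cons ((r:ℂ) * ω ^ l) y) - MvPolynomial.eval y (P l)‖ ≤ ε/2/k :=
          hP l y hy
        have h2 : ‖(k:ℂ)⁻¹ * ω⁻¹ ^ (j*l) * (x 0 / r) ^ j‖ ≤ (k:ℝ)⁻¹ := by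
          rw [norm_mul, norm_mul, norm_pow, norm_pow, norm_inv, norm_div]
          have hω1 : ‖ω⁻¹‖ = 1 := by
            rw [norm_inv, hωa]; norm_num
          have hzr : ‖x 0‖ / ‖(r:ℂ)‖ ≤ 1 := by
            rw [Complex.norm_real, Real.norm_eq_abs, abs_of_pos hr, div_le_one hr]
            exact hx 0
          have hk1 : ‖(k:ℂ)‖ = (k:ℝ) := by
            rw [Complex.norm_natCast]
          rw [hω1, one_pow, hk1, mul_one]
          calc (k:ℝ)⁻¹ * (‖x 0‖ / ‖(r:ℂ)‖) ^ j ≤ (k:ℝ)⁻¹ * 1 := by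
                apply mul_le_mul_of_nonneg_left (pow_le_one₀ (by positivity) hzr)
                  (by positivity)
            _ = (k:ℝ)⁻¹ := mul_one _
        exact mul_le_mul h1 h2 (norm_nonneg _) (by positivity)
      calc ‖∑ l ∈ range k, ∑ j ∈ range k,
            (g (Fin.cons ((r:ℂ) * ω ^ l) y) - MvPolynomial.eval y (P l)) *
              ((k:ℂ)⁻¹ * ω⁻¹ ^ (j*l) * (x 0 / r) ^ j)‖
          ≤ ∑ l ∈ range k, ∑ j ∈ range k, (ε/2/k) * (k:ℝ)⁻¹ := by
            refine (norm_sum_le _ _).trans (Finset.sum_le_sum fun l hl => ?_)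
            exact (norm_sum_le _ _).trans (Finset.sum_le_sum fun j hj => hterm l hl j hj)
        _ = ε/2 := by
            simp only [Finset.sum_const, card_range, nsmul_eq_mul]
            field_simp
    calc ‖g x - MvPolynomial.eval x Q‖
        ≤ ‖g x - S‖ + ‖S - MvPolynomial.eval x Q‖ := norm_sub_le_norm_sub_add_norm_sub _ _ _
      _ ≤ ε/2 + ε/2 := add_le_add (hsamp.trans hkb) hS
      _ = ε := by ring

/-- If `F : ℂⁿ → ℂⁿ` is an entire holomorphic map and `K ⊆ ℂⁿ` is a compact
polynomially convex set such that `F ⁻¹' K` is compact, then `F ⁻¹' K` is polynomially convex. -/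
theorem isPolyConvex_preimage_of_entire (n : ℕ) (F : (Fin n → ℂ) → (Fin n → ℂ))
    (hF : Differentiable ℂ F) (K : Set (Fin n → ℂ)) (hKc : IsCompact K)
    (hKpc : IsPolyConvex K) (hpre : IsCompact (F ⁻¹' K)) :
    IsPolyConvex (F ⁻¹' K) := by
  intro w hw
  by_cases hne : (F ⁻¹' K).Nonempty
  · obtain ⟨P, hP⟩ := hKpc (F w) hw
    set g : (Fin n → ℂ) → ℂ := fun z => MvPolynomial.eval (F z) P with hgdef
    have hg : Differentiable ℂ g := (diffEval P).comp hF
    -- maximum of ‖g‖ on the compact preimage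
    obtain ⟨z₀, hz₀, hmax⟩ := hpre.exists_isMaxOn hne
      (hg.continuous.norm.continuousOn)
    have hlt : ‖g z₀‖ < ‖MvPolynomial.eval (F w) P‖ := hP (F z₀) hz₀
    set δ : ℝ := ‖MvPolynomial.eval (F w) P‖ - ‖g z₀‖ with hδdef
    have hδ : 0 < δ := by simp only [hδdef]; linarith
    -- radius containing the compact set and w
    have hbd := (hpre.union (isCompact_singleton (x := w))).isBounded
    obtain ⟨C, hC⟩ := hbd.exists_norm_le
    set r : ℝ := |C| + 1 with hrdef
    have hr : 0 < r := by positivity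
    have hrS : ∀ x ∈ F ⁻¹' K ∪ {w}, ∀ i, ‖x i‖ ≤ r := by
      intro x hx i
      calc ‖x i‖ ≤ ‖x‖ := norm_le_pi_norm x i
        _ ≤ C := hC x hx
        _ ≤ r := by
              rw [hrdef]
              have := le_abs_self C
              linarith
    obtain ⟨Q, hQ⟩ := approx n g hg r hr (δ/3) (by linarith)
    refine ⟨Q, fun z hz => ?_⟩
    have hz' : ∀ i, ‖z i‖ ≤ r := hrS z (Set.mem_union_left _ hz)
    have hw' : ∀ i, ‖w i‖ ≤ r := hrS w (Set.mem_union_right _ rfl)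
    have h1 : ‖MvPolynomial.eval z Q‖ ≤ ‖g z‖ + δ/3 := by
      have := hQ z hz'
      calc ‖MvPolynomial.eval z Q‖ = ‖g z - (g z - MvPolynomial.eval z Q)‖ := by ring_nf
        _ ≤ ‖g z‖ + ‖g z - MvPolynomial.eval z Q‖ := norm_sub_le _ _
        _ ≤ ‖g z‖ + δ/3 := by linarith
    have h2 : ‖g w‖ - δ/3 ≤ ‖MvPolynomial.eval w Q‖ := by
      have := hQ w hw'
      have h3 : ‖g w‖ ≤ ‖MvPolynomial.eval w Q‖ + ‖g w - MvPolynomial.eval w Q‖ := by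
        calc ‖g w‖ = ‖MvPolynomial.eval w Q + (g w - MvPolynomial.eval w Q)‖ := by ring_nf
          _ ≤ ‖MvPolynomial.eval w Q‖ + ‖g w - MvPolynomial.eval w Q‖ := norm_add_le _ _
      linarith
    have h4 : ‖g z‖ ≤ ‖g z₀‖ := hmax hz
    have h5 : ‖g w‖ = ‖g z₀‖ + δ := by simp only [hδdef, hgdef]; ring
    calc ‖MvPolynomial.eval z Q‖ ≤ ‖g z‖ + δ/3 := h1
      _ ≤ ‖g z₀‖ + δ/3 := by linarith
      _ < ‖g w‖ - δ/3 := by rw [h5]; linarith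
      _ ≤ ‖MvPolynomial.eval w Q‖ := h2
  · refine ⟨1, fun z hz => ?_⟩
    exact absurd ⟨z, hz⟩ hne
end
end

section
/- Let γ > 1/2, r > 0, and let F : \bar{D}_r(0) → ℂ be a C²-smooth function with F(0) = 0, both first-order partial derivatives of F vanishing at 0, and ‖F‖_{C²(\bar{D}_r(0))} ≤ (2γ−1)³/(2¹⁴ γ³). Then for every ζ ∈ \bar{D}_r(0) with ζ ≠ 0 one has |4γ F(ζ,\bar ζ)/(ζ + 2γ\bar ζ)²| < 1/4, so that f(ζ,\bar ζ) := −((ζ + 2γ\bar ζ)/(2γ)) (1 − √(1 + 4γ F(ζ,\bar ζ)/(ζ + 2γ\bar ζ)²)) is well defined using the principal branch of the square root (with f(0) := 0); moreover f satisfies the quadratic equation γ f² + (ζ + 2γ\bar ζ) f − F(ζ,\bar ζ) = 0 and the bounds |f(ζ,\bar ζ)/(ζ + 2γ\bar ζ)| ≤ 8‖F‖_{C²}/(2γ−1)², and in particular |f(ζ,\bar ζ)| ≤ |ζ + 2γ\bar ζ|/(8γ). -/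
open Complex Metric ComplexConjugate

noncomputable section

/-- Directional partial derivative (over ℝ) of `F : ℂ → ℂ` along `v`;
`pd 1 F = F_x` and `pd Complex.I F = F_y`. -/
def pd (v : ℂ) (F : ℂ → ℂ) : ℂ → ℂ := fun z => fderiv ℝ F z v

/-- `B` is a bound for all partial derivatives of order `≤ 2` of `F` (w.r.t. the real
coordinates `x, y`) on the set `s`; i.e. `‖F‖_{C²(s)} ≤ B`. -/
def IsC2Bound (F : ℂ → ℂ) (s : Set ℂ) (B : ℝ) : Prop :=
  ∀ z ∈ s, ‖F z‖ ≤ B ∧ ‖pd 1 F z‖ ≤ B ∧ ‖pd Complex.I F z‖ ≤ B ∧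
    ‖pd 1 (pd 1 F) z‖ ≤ B ∧ ‖pd Complex.I (pd 1 F) z‖ ≤ B ∧
    ‖pd 1 (pd Complex.I F) z‖ ≤ B ∧ ‖pd Complex.I (pd Complex.I F) z‖ ≤ B

lemma clm_basis {E : Type*} [NormedAddCommGroup E] [NormedSpace ℝ E]
    (L : ℂ →L[ℝ] E) (v : ℂ) : L v = v.re • L 1 + v.im • L Complex.I := by
  have hv : v = v.re • (1:ℂ) + v.im • Complex.I := by
    simp [Complex.real_smul, Complex.re_add_im]
  conv_lhs => rw [hv]
  simp only [map_add, map_smul]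

lemma clm_norm_bound {E : Type*} [NormedAddCommGroup E] [NormedSpace ℝ E]
    (L : ℂ →L[ℝ] E) (C : ℝ) (hC : 0 ≤ C)
    (h1 : ‖L 1‖ ≤ C) (hI : ‖L Complex.I‖ ≤ C) : ‖L‖ ≤ 2 * C := by
  refine ContinuousLinearMap.opNorm_le_bound _ (by linarith) fun v => ?_
  rw [clm_basis L v]
  have hre : |v.re| ≤ ‖v‖ := Complex.abs_re_le_norm v
  have him : |v.im| ≤ ‖v‖ := Complex.abs_im_le_norm v
  calc ‖v.re • L 1 + v.im • L Complex.I‖ ≤ ‖v.re • L 1‖ + ‖v.im • L Complex.I‖ :=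
        norm_add_le _ _
    _ ≤ |v.re| * C + |v.im| * C := by
        simp only [norm_smul, Real.norm_eq_abs]
        gcongr
    _ ≤ ‖v‖ * C + ‖v‖ * C := by gcongr
    _ = 2 * C * ‖v‖ := by ring

lemma taylor_bound (r B : ℝ) (hr : 0 < r) (F : ℂ → ℂ)
    (hF : ContDiffOn ℝ 2 F (closedBall (0 : ℂ) r))
    (hF0 : F 0 = 0) (hFx : pd 1 F 0 = 0) (hFy : pd Complex.I F 0 = 0)
    (hB : IsC2Bound F (closedBall (0 : ℂ) r) B) :
    ∀ ζ ∈ closedBall (0:ℂ) r, ‖F ζ‖ ≤ 4 * B * ‖ζ‖^2 := by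
  have hB0 : 0 ≤ B := le_trans (norm_nonneg _) (hB 0 (by simp [hr.le])).1
  have hCA : ∀ z ∈ ball (0:ℂ) r, ContDiffAt ℝ 2 F z := fun z hz =>
    hF.contDiffAt (closedBall_mem_nhds_of_mem hz)
  have hd1 : ∀ z ∈ ball (0:ℂ) r, DifferentiableAt ℝ F z := fun z hz =>
    (hCA z hz).differentiableAt (by norm_num)
  have hd2 : ∀ z ∈ ball (0:ℂ) r, DifferentiableAt ℝ (fderiv ℝ F) z := fun z hz =>
    ((hCA z hz).fderiv_right (m := 1) (by norm_num)).differentiableAt (by norm_num)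
  have hA : ∀ z ∈ ball (0:ℂ) r, ‖fderiv ℝ (fderiv ℝ F) z‖ ≤ 4 * B := by
    intro z hz
    set A := fderiv ℝ (fderiv ℝ F) z with hAdef
    have key : ∀ v w : ℂ, pd w (pd v F) z = A w v := by
      intro v w
      have h1 : fderiv ℝ (fun y => fderiv ℝ F y v) z = A.flip v := by
        have := fderiv_clm_apply (hd2 z hz) (differentiableAt_const v)
        simp only [fderiv_const_apply] at this
        simpa using this
      show (fderiv ℝ (fun y => fderiv ℝ F y v) z) w = A w v
      rw [h1]
      rfl
    have hzc : z ∈ closedBall (0:ℂ) r := ball_subset_closedBall hz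
    obtain ⟨-, -, -, b11, bI1, b1I, bII⟩ := hB z hzc
    rw [key 1 1] at b11; rw [key 1 Complex.I] at bI1
    rw [key Complex.I 1] at b1I; rw [key Complex.I Complex.I] at bII
    have h1 : ‖A 1‖ ≤ 2 * B := clm_norm_bound (A 1) B hB0 b11 b1I
    have hI : ‖A Complex.I‖ ≤ 2 * B := clm_norm_bound (A Complex.I) B hB0 bI1 bII
    have := clm_norm_bound A (2*B) (by linarith) h1 hI
    linarith
  have hD0 : fderiv ℝ F 0 = 0 := by
    ext1 v
    rw [clm_basis (fderiv ℝ F 0) v]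
    have h1 : fderiv ℝ F 0 1 = 0 := hFx
    have h2 : fderiv ℝ F 0 Complex.I = 0 := hFy
    simp [h1, h2]
  have hDb : ∀ z ∈ ball (0:ℂ) r, ‖fderiv ℝ F z‖ ≤ 4 * B * ‖z‖ := by
    intro z hz
    have hsub : closedBall (0:ℂ) ‖z‖ ⊆ ball (0:ℂ) r := by
      intro x hx
      simp only [mem_closedBall, mem_ball, dist_zero_right] at *
      exact lt_of_le_of_lt hx hz
    have := (convex_closedBall (0:ℂ) ‖z‖).norm_image_sub_le_of_norm_fderiv_le
      (f := fderiv ℝ F) (x := (0:ℂ)) (y := z)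
      (fun x hx => hd2 x (hsub hx)) (fun x hx => hA x (hsub hx))
      (by simp) (by simp)
    rw [hD0] at this
    simpa [mul_comm] using this
  have hFb : ∀ z ∈ ball (0:ℂ) r, ‖F z‖ ≤ 4 * B * ‖z‖^2 := by
    intro z hz
    have hsub : closedBall (0:ℂ) ‖z‖ ⊆ ball (0:ℂ) r := by
      intro x hx
      simp only [mem_closedBall, mem_ball, dist_zero_right] at *
      exact lt_of_le_of_lt hx hz
    have hbd : ∀ x ∈ closedBall (0:ℂ) ‖z‖, ‖fderiv ℝ F x‖ ≤ 4 * B * ‖z‖ := by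
      intro x hx
      refine le_trans (hDb x (hsub hx)) ?_
      have : ‖x‖ ≤ ‖z‖ := by simpa using hx
      nlinarith [norm_nonneg x]
    have := (convex_closedBall (0:ℂ) ‖z‖).norm_image_sub_le_of_norm_fderiv_le
      (f := F) (x := (0:ℂ)) (y := z)
      (fun x hx => hd1 x (hsub hx)) hbd (by simp) (by simp)
    rw [hF0] at this
    simpa [sq, mul_assoc] using this
  intro ζ hζ
  rcases eq_or_ne ζ 0 with rfl | hζ0
  · simp [hF0]
  rcases lt_or_eq_of_le (mem_closedBall.mp hζ) with h | h
  · exact hFb ζ (by simpa [mem_ball] using h)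
  · have hnorm : ‖ζ‖ = r := by simpa [dist_zero_right] using h
    have hζpos : 0 < ‖ζ‖ := norm_pos_iff.mpr hζ0
    have hcont : ContinuousWithinAt F (closedBall (0:ℂ) r) ζ := hF.continuousOn ζ hζ
    have hIoo : Set.Ioo (0:ℝ) 1 ∈ nhdsWithin (1:ℝ) (Set.Iio 1) :=
      Ioo_mem_nhdsLT_of_mem (by constructor <;> norm_num)
    have hmap : Filter.Tendsto (fun t : ℝ => (t : ℂ) • ζ) (nhdsWithin (1:ℝ) (Set.Iio 1))
        (nhdsWithin ζ (closedBall (0:ℂ) r)) := by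
      rw [tendsto_nhdsWithin_iff]
      constructor
      · apply Filter.Tendsto.mono_left ?_ nhdsWithin_le_nhds
        have : Continuous (fun t : ℝ => (t : ℂ) • ζ) := by fun_prop
        simpa using this.tendsto 1
      · filter_upwards [hIoo] with t ht
        simp only [mem_closedBall, dist_zero_right, norm_smul, Complex.norm_real,
          Real.norm_eq_abs, abs_of_pos ht.1]
        calc t * ‖ζ‖ ≤ 1 * ‖ζ‖ := by nlinarith [ht.2]
          _ ≤ r := by rw [one_mul, hnorm]
    have htend : Filter.Tendsto (fun t : ℝ => ‖F ((t:ℂ) • ζ)‖)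
        (nhdsWithin (1:ℝ) (Set.Iio 1)) (nhds ‖F ζ‖) := (hcont.tendsto.comp hmap).norm
    refine le_of_tendsto htend ?_
    filter_upwards [hIoo] with t ht
    have hmem : (t:ℂ) • ζ ∈ ball (0:ℂ) r := by
      simp only [mem_ball, dist_zero_right, norm_smul, Complex.norm_real, Real.norm_eq_abs,
        abs_of_pos ht.1]
      calc t * ‖ζ‖ < 1 * ‖ζ‖ := by nlinarith [ht.2]
        _ = r := by rw [one_mul, hnorm]
    refine le_trans (hFb _ hmem) ?_
    have hle : ‖(t:ℂ) • ζ‖ ≤ ‖ζ‖ := by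
      rw [norm_smul, Complex.norm_real, Real.norm_eq_abs, abs_of_pos ht.1]
      nlinarith [ht.2]
    have h2 : ‖(t:ℂ) • ζ‖^2 ≤ ‖ζ‖^2 := pow_le_pow_left₀ (norm_nonneg _) hle 2
    nlinarith

/-- Let `γ > 1/2`, `r > 0` and let `F` be `C²` on the closed disc
`D̄_r(0)`, vanishing at `0` together with its first partial derivatives, with
`‖F‖_{C²} ≤ B ≤ (2γ−1)³/(2¹⁴γ³)`. Then for each `ζ ∈ D̄_r(0)`, `ζ ≠ 0`, one has
`|4γF(ζ)/(ζ + 2γζ̄)²| < 1/4`; and the value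
`f = −((ζ + 2γζ̄)/(2γ))(1 − √(1 + 4γF(ζ)/(ζ + 2γζ̄)²))` (principal branch, via `cpow`)
satisfies `γ f² + (ζ + 2γζ̄) f − F(ζ) = 0`, `|f/(ζ + 2γζ̄)| ≤ 8B/(2γ−1)²`,
and `|f| ≤ |ζ + 2γζ̄|/(8γ)`. -/
theorem quadratic_solution_bounds (γ r : ℝ) (hγ : 1/2 < γ) (hr : 0 < r) (F : ℂ → ℂ)
    (hF : ContDiffOn ℝ 2 F (closedBall (0 : ℂ) r))
    (hF0 : F 0 = 0) (hFx : pd 1 F 0 = 0) (hFy : pd Complex.I F 0 = 0)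
    (B : ℝ) (hB : IsC2Bound F (closedBall (0 : ℂ) r) B)
    (hBle : B ≤ (2*γ - 1)^3 / (2^14 * γ^3))
    (ζ : ℂ) (hζ : ζ ∈ closedBall (0 : ℂ) r) (hζ0 : ζ ≠ 0) :
    ‖4 * (γ : ℂ) * F ζ / (ζ + 2*(γ:ℂ)*conj ζ)^2‖ < 1/4 ∧
    ∀ f : ℂ, f = -((ζ + 2*(γ:ℂ)*conj ζ)/(2*(γ:ℂ))) *
        (1 - (1 + 4*(γ:ℂ)*F ζ/(ζ + 2*(γ:ℂ)*conj ζ)^2) ^ ((1:ℂ)/2)) →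
      ((γ : ℂ) * f^2 + (ζ + 2*(γ:ℂ)*conj ζ) * f - F ζ = 0 ∧
       ‖f / (ζ + 2*(γ:ℂ)*conj ζ)‖ ≤ 8*B/(2*γ - 1)^2 ∧
       ‖f‖ ≤ ‖ζ + 2*(γ:ℂ)*conj ζ‖ / (8*γ)) := by
  have hγ0 : (0:ℝ) < γ := by linarith
  have hγ1 : (0:ℝ) < 2*γ - 1 := by linarith
  have hB0 : 0 ≤ B := le_trans (norm_nonneg _) (hB 0 (by simp [hr.le])).1
  have hFζ : ‖F ζ‖ ≤ 4 * B * ‖ζ‖^2 := taylor_bound r B hr F hF hF0 hFx hFy hB ζ hζ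
  set w : ℂ := ζ + 2*(γ:ℂ)*conj ζ with hwdef
  have ha : 0 < ‖ζ‖ := norm_pos_iff.mpr hζ0
  have hwl : (2*γ - 1) * ‖ζ‖ ≤ ‖w‖ := by
    have h1 : ‖2*(γ:ℂ)*conj ζ‖ = 2*γ*‖ζ‖ := by
      simp [norm_mul, Complex.norm_real, abs_of_pos hγ0, Complex.norm_conj]
    have h2 : ‖2*(γ:ℂ)*conj ζ‖ - ‖-ζ‖ ≤ ‖2*(γ:ℂ)*conj ζ - -ζ‖ := norm_sub_norm_le _ _
    have h3 : 2*(γ:ℂ)*conj ζ - -ζ = w := by rw [hwdef]; ring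
    rw [h3, h1, norm_neg] at h2
    linarith
  have hW : 0 < ‖w‖ := lt_of_lt_of_le (by positivity) hwl
  have hw0 : w ≠ 0 := norm_pos_iff.mp hW
  have hγc0 : (2*(γ:ℂ)) ≠ 0 := by
    simp only [ne_eq, mul_eq_zero, Complex.ofReal_eq_zero]
    push_neg
    exact ⟨by norm_num, by exact_mod_cast hγ0.ne'⟩
  have hγc : (γ:ℂ) ≠ 0 := Complex.ofReal_ne_zero.mpr hγ0.ne'
  have hW2 : (2*γ-1)^2 * ‖ζ‖^2 ≤ ‖w‖^2 := by
    nlinarith [mul_le_mul hwl hwl (by positivity : (0:ℝ) ≤ (2*γ-1)*‖ζ‖) (norm_nonneg w)]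
  have hnum : ‖4*(γ:ℂ)*F ζ / w^2‖ = 4*γ*‖F ζ‖/‖w‖^2 := by
    rw [norm_div, norm_mul, norm_mul, norm_pow]
    norm_num [Complex.norm_real, abs_of_pos hγ0]
  have huB : ‖4*(γ:ℂ)*F ζ / w^2‖ ≤ 16*γ*B/(2*γ-1)^2 := by
    rw [hnum, div_le_div_iff₀ (by positivity) (by positivity)]
    nlinarith [mul_le_mul_of_nonneg_left hW2 (mul_nonneg (by positivity : (0:ℝ) ≤ 16*γ) hB0),
      mul_le_mul_of_nonneg_left hFζ (by positivity : (0:ℝ) ≤ 4*γ*(2*γ-1)^2)]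
  have hu4 : ‖4*(γ:ℂ)*F ζ / w^2‖ < 1/4 := by
    refine lt_of_le_of_lt huB ?_
    rw [div_lt_div_iff₀ (by positivity) (by norm_num)]
    have hBle' : 16*γ*B ≤ 16*γ*((2*γ-1)^3/(2^14*γ^3)) :=
      mul_le_mul_of_nonneg_left hBle (by positivity)
    have h2 : 16*γ*((2*γ-1)^3/(2^14*γ^3)) = (2*γ-1)^3/(2^10*γ^2) := by
      field_simp; ring
    rw [h2] at hBle'
    have h3 : (2*γ-1)^3/(2^10*γ^2) * 4 < (2*γ-1)^2 * 1 := by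
      rw [div_mul_eq_mul_div, div_lt_iff₀ (by positivity)]
      nlinarith [sq_nonneg (16*γ - 1), sq_nonneg (2*γ-1), hγ1]
    calc 16*γ*B*4 ≤ (2*γ-1)^3/(2^10*γ^2)*4 := by linarith
      _ < (2*γ-1)^2*1 := h3
      _ = 1*(2*γ-1)^2 := by ring
  refine ⟨hu4, ?_⟩
  intro f hf
  set u : ℂ := 4*(γ:ℂ)*F ζ / w^2 with hudef
  set s : ℂ := (1 + u) ^ ((1:ℂ)/2) with hsdef
  have hne : (1:ℂ) + u ≠ 0 := by
    intro h
    have hu1 : u = -1 := by linear_combination h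
    rw [hu1] at hu4
    norm_num at hu4
  have hs2 : s^2 = 1 + u := by
    have := Complex.cpow_nat_inv_pow (1 + u) (n := 2) (by norm_num)
    rw [hsdef, show ((1:ℂ)/2) = (((2:ℕ):ℂ))⁻¹ by norm_num]
    exact_mod_cast this
  have hres : 0 ≤ s.re := by
    rw [hsdef, show ((1:ℂ)/2) = (2⁻¹:ℂ) by norm_num, Complex.cpow_inv_two_re]
    exact Real.sqrt_nonneg _
  have h1s : 1 ≤ ‖1 + s‖ := by
    have h1 : (1:ℝ) ≤ (1 + s).re := by simp [Complex.add_re]; linarith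
    calc (1:ℝ) ≤ (1 + s).re := h1
      _ ≤ ‖1 + s‖ := Complex.re_le_norm _
      _ = ‖1 + s‖ := rfl
  have h1s0 : (1:ℂ) + s ≠ 0 := by
    intro h; rw [h] at h1s; simp at h1s; linarith
  have hprod : (1 - s) * (1 + s) = -u := by linear_combination -hs2
  have h1ms : ‖1 - s‖ ≤ ‖u‖ := by
    have hdiv : 1 - s = -u / (1 + s) := by
      rw [eq_div_iff h1s0]; linear_combination hprod
    rw [hdiv, norm_div, norm_neg]
    calc ‖u‖ / ‖1+s‖ ≤ ‖u‖ / 1 := by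
          apply div_le_div_of_nonneg_left (norm_nonneg u) one_pos h1s
      _ = ‖u‖ := div_one _
  have hFval : F ζ = (s^2 - 1) * w^2 / (4*(γ:ℂ)) := by
    rw [hs2, hudef]
    field_simp [hγc, hw0]
    ring
  have hquad : (γ:ℂ) * f^2 + w * f - F ζ = 0 := by
    rw [hf, hFval]
    field_simp [hγc, hw0]
    ring
  have hfw : f / w = -(1 - s)/(2*(γ:ℂ)) := by
    rw [hf]
    field_simp
  have hfwnorm : ‖f / w‖ = ‖1 - s‖/(2*γ) := by
    rw [hfw, norm_div, norm_neg]
    congr 1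
    simp [norm_mul, Complex.norm_real, abs_of_pos hγ0]
  have hbound2 : ‖f / w‖ ≤ 8*B/(2*γ-1)^2 := by
    rw [hfwnorm]
    have : ‖1 - s‖/(2*γ) ≤ (16*γ*B/(2*γ-1)^2)/(2*γ) := by
      apply div_le_div_of_nonneg_right ?_ (by positivity)
      · exact le_trans h1ms huB
    refine le_trans this (le_of_eq ?_)
    field_simp
    ring
  refine ⟨hquad, hbound2, ?_⟩
  have hfeq : f = (f / w) * w := (div_mul_cancel₀ f hw0).symm
  calc ‖f‖ = ‖f/w‖ * ‖w‖ := by rw [hfeq, norm_mul]; rw [← hfeq]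
    _ ≤ (‖u‖/(2*γ)) * ‖w‖ := by
        apply mul_le_mul_of_nonneg_right ?_ (norm_nonneg w)
        rw [hfwnorm]
        exact div_le_div_of_nonneg_right h1ms (by positivity)
    _ ≤ ((1/4)/(2*γ)) * ‖w‖ := by
        apply mul_le_mul_of_nonneg_right ?_ (norm_nonneg w)
        exact div_le_div_of_nonneg_right hu4.le (by positivity)
    _ = ‖w‖/(8*γ) := by ring
end
end

section
/- Let γ > 1/2, set α = (2γ−1)/(32γ²), and define the polynomial ψ : ℂ² → ℂ by ψ(z₁, z₂) = (1/4)(z₁² − z₂²) + 2α z₁ z₂. Then for all ζ, c ∈ ℂ with |c| ≤ α|ζ| one has Re ψ(ζ, \bar ζ + c) ≥ (3/8) α |ζ|². In particular, Re ψ(ζ, \bar ζ + c) ≥ 0 with equality only when ζ = 0. -/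
open Complex ComplexConjugate

set_option maxHeartbeats 1000000 in
/-- For `γ > 1/2`, `α = (2γ−1)/(32γ²)` and
`ψ(z₁,z₂) = (1/4)(z₁² − z₂²) + 2α z₁ z₂`, one has
`Re ψ(ζ, ζ̄ + c) ≥ (3/8) α |ζ|²` whenever `|c| ≤ α |ζ|`; in particular the real part is
nonnegative and vanishes only for `ζ = 0`. -/
theorem re_psi_graph_S1_lower_bound (γ : ℝ) (hγ : 1/2 < γ) (α : ℝ)
    (hα : α = (2*γ - 1)/(32*γ^2)) (ψ : ℂ → ℂ → ℂ)
    (hψ : ∀ z₁ z₂ : ℂ, ψ z₁ z₂ = (1/4) * (z₁^2 - z₂^2) + 2 * (α : ℂ) * z₁ * z₂)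
    (ζ c : ℂ) (hc : ‖c‖ ≤ α * ‖ζ‖) :
    (3/8) * α * ‖ζ‖^2 ≤ (ψ ζ (conj ζ + c)).re ∧
    (0 ≤ (ψ ζ (conj ζ + c)).re ∧ ((ψ ζ (conj ζ + c)).re = 0 → ζ = 0)) := by
  have hγ0 : 0 < γ := lt_trans (by norm_num) hγ
  have hα0 : 0 < α := by
    rw [hα]
    apply div_pos (by linarith) (by positivity)
  have hα32 : α ≤ 1/32 := by
    rw [hα, div_le_div_iff₀ (by positivity) (by norm_num)]
    nlinarith [sq_nonneg (γ - 1)]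
  set x := ζ.re with hx
  set y := ζ.im with hy
  set a := c.re with ha
  set b := c.im with hb
  set S : ℝ := ‖ζ‖^2 with hSdef
  have hS : 0 ≤ S := sq_nonneg _
  have hζn : S = x^2 + y^2 := by
    rw [hSdef, Complex.sq_norm, Complex.normSq_apply]
    ring
  have hcn : a^2 + b^2 ≤ α^2 * S := by
    have h1 : ‖c‖^2 ≤ (α * ‖ζ‖)^2 := by
      apply sq_le_sq' _ hc
      nlinarith [norm_nonneg c]
    have h2 : ‖c‖^2 = a^2 + b^2 := by
      rw [Complex.sq_norm, Complex.normSq_apply]; ring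
    nlinarith
  have hcc : ‖ζ‖ * ‖c‖ ≤ α * S := by
    have := mul_le_mul_of_nonneg_left hc (norm_nonneg ζ)
    nlinarith
  have hb1 : |x*a - y*b| ≤ α * S := by
    have h := Complex.abs_re_le_norm (ζ * c)
    rw [norm_mul] at h
    have heq : (ζ * c).re = x*a - y*b := by simp [Complex.mul_re]; rfl
    rw [heq] at h
    calc |x*a - y*b| ≤ ‖ζ‖ * ‖c‖ := by
          simpa using h
      _ ≤ α * S := hcc
  have hb2 : |x*a + y*b| ≤ α * S := by
    have h := Complex.abs_re_le_norm (conj ζ * c)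
    rw [norm_mul] at h
    have heq : (conj ζ * c).re = x*a + y*b := by
      simp [Complex.mul_re, Complex.conj_re, Complex.conj_im]; rfl
    rw [heq] at h
    calc |x*a + y*b| ≤ ‖ζ‖ * ‖c‖ := by
          simpa [Complex.norm_conj] using h
      _ ≤ α * S := hcc
  obtain ⟨hb1l, hb1u⟩ := abs_le.mp hb1
  obtain ⟨hb2l, hb2u⟩ := abs_le.mp hb2
  have hαS : α^2 * S ≤ (1/32) * (α * S) := by
    have := mul_le_mul_of_nonneg_right hα32 (mul_nonneg hα0.le hS)
    nlinarith
  have hre : (ψ ζ (conj ζ + c)).re =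
      2*α*(x^2+y^2) + 2*α*(x*a - y*b) - (1/2)*(x*a + y*b) - (1/4)*(a^2 - b^2) := by
    rw [hψ]
    simp [Complex.add_re, Complex.add_im, Complex.sub_re, Complex.sub_im,
      Complex.mul_re, Complex.mul_im, Complex.conj_re, Complex.conj_im, pow_two]
    ring
  have key : (3/8) * α * S ≤ (ψ ζ (conj ζ + c)).re := by
    rw [hre, ← hζn]
    have h2b : 2*α*(x*a - y*b) ≥ 2*α*(-(α*S)) :=
      mul_le_mul_of_nonneg_left hb1l (by positivity)
    linarith [h2b, hb2u, hcn, hαS, sq_nonneg b, mul_nonneg hα0.le hS]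
  refine ⟨key, le_trans (by positivity) key, fun h0 => ?_⟩
  have hS0 : S ≤ 0 := by nlinarith
  have : ‖ζ‖ = 0 := by nlinarith [norm_nonneg ζ]
  exact norm_eq_zero.mp this
end

section
/- Let γ > 1/2, set α = (2γ−1)/(32γ²), and define the polynomial ψ : ℂ² → ℂ by ψ(z₁, z₂) = (1/4)(z₁² − z₂²) + 2α z₁ z₂. Then for all ζ, c ∈ ℂ with |c| ≤ α|ζ| one has Re ψ(ζ, −ζ/γ − \bar ζ + c) ≤ −3α |ζ|². In particular, Re ψ(ζ, −ζ/γ − \bar ζ + c) ≤ 0 with equality only when ζ = 0. -/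
open Complex ComplexConjugate

private lemma cross_bound (C x u α : ℝ) (hα : 0 < α) (hC : |C| ≤ 2) :
    C*(x*u) ≤ α*x^2 + (1/α)*u^2 := by
  have h : 2*α*|x*u| ≤ α^2*x^2 + u^2 := by
    rw [abs_mul]
    nlinarith [sq_nonneg (α * |x| - |u|), _root_.sq_abs x, _root_.sq_abs u, abs_nonneg x, abs_nonneg u]
  have h2 : C*(x*u) ≤ 2*|x*u| := by
    calc C*(x*u) ≤ |C*(x*u)| := le_abs_self _
    _ = |C| * |x * u| := abs_mul _ _
    _ ≤ 2 * |x * u| := mul_le_mul_of_nonneg_right hC (abs_nonneg _)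
  have e : α*x^2 + (1/α)*u^2 = (α^2*x^2 + u^2)/α := by field_simp
  have h3 : 2*|x*u| ≤ α*x^2 + (1/α)*u^2 := by
    rw [e, le_div_iff₀ hα]; nlinarith [h]
  linarith

set_option maxHeartbeats 1000000 in
/-- For `γ > 1/2`, `α = (2γ−1)/(32γ²)` and
`ψ(z₁,z₂) = (1/4)(z₁² − z₂²) + 2α z₁ z₂`, one has
`Re ψ(ζ, −ζ/γ − ζ̄ + c) ≤ −3α|ζ|²` whenever `|c| ≤ α |ζ|`; in particular the real part is
nonpositive and vanishes only for `ζ = 0`. -/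
theorem re_psi_graph_S2_upper_bound (γ : ℝ) (hγ : 1/2 < γ) (α : ℝ)
    (hα : α = (2*γ - 1)/(32*γ^2)) (ψ : ℂ → ℂ → ℂ)
    (hψ : ∀ z₁ z₂ : ℂ, ψ z₁ z₂ = (1/4) * (z₁^2 - z₂^2) + 2 * (α : ℂ) * z₁ * z₂)
    (ζ c : ℂ) (hc : ‖c‖ ≤ α * ‖ζ‖) :
    (ψ ζ (-ζ/(γ : ℂ) - conj ζ + c)).re ≤ -(3 * α * ‖ζ‖^2) ∧
    ((ψ ζ (-ζ/(γ : ℂ) - conj ζ + c)).re ≤ 0 ∧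
      ((ψ ζ (-ζ/(γ : ℂ) - conj ζ + c)).re = 0 → ζ = 0)) := by
  have hγ0 : (0:ℝ) < γ := by linarith
  set g : ℝ := γ⁻¹ with hg
  set x : ℝ := ζ.re
  set y : ℝ := ζ.im
  set u : ℝ := c.re
  set v : ℝ := c.im
  have hg0 : 0 < g := by positivity
  have hgγ : g*γ = 1 := inv_mul_cancel₀ hγ0.ne'
  have hg2 : g < 2 := by nlinarith
  have hαpos : 0 < α := by
    rw [hα]; apply div_pos (by linarith) (by positivity)
  have hαle : α ≤ 1/32 := by
    rw [hα, div_le_div_iff₀ (by positivity) (by norm_num)]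
    nlinarith [sq_nonneg (γ - 1)]
  have h32 : 32*α = 2*g - g^2 := by
    rw [hα, hg]; field_simp
  -- real part formula
  have hre : (ψ ζ (-ζ/(γ:ℂ) - conj ζ + c)).re
      = (1/4)*(x^2 - y^2) - (1/4)*((u - x - g*x)^2 - (v + y - g*y)^2)
        + 2*α*(x*(u - x - g*x) - y*(v + y - g*y)) := by
    have hdiv : -ζ/(γ:ℂ) = ((g:ℝ):ℂ) * (-ζ) := by
      rw [hg]; push_cast; field_simp
    rw [hψ, hdiv]
    simp [Complex.mul_re, Complex.mul_im, Complex.add_re, Complex.add_im, Complex.sub_re,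
      Complex.sub_im, pow_two]
    ring
  have hn : ‖ζ‖^2 = x^2 + y^2 := by
    rw [Complex.sq_norm, Complex.normSq_apply]; ring
  have hs : u^2 + v^2 ≤ α^2 * (x^2 + y^2) := by
    have h1 : ‖c‖^2 ≤ (α * ‖ζ‖)^2 := pow_le_pow_left₀ (norm_nonneg c) hc 2
    have h2 : ‖c‖^2 = u^2 + v^2 := by
      rw [Complex.sq_norm, Complex.normSq_apply]; ring
    rw [h2, mul_pow, hn] at h1; linarith
  -- cross-term bounds
  have hC1 : |1/2*(1+g) + 2*α| ≤ 2 := by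
    rw [abs_le]; constructor <;> linarith
  have hC2 : |1/2*(1-g) - 2*α| ≤ 2 := by
    rw [abs_le]; constructor <;> linarith
  have hA := cross_bound (1/2*(1+g) + 2*α) x u α hαpos hC1
  have hB := cross_bound (1/2*(1-g) - 2*α) y v α hαpos hC2
  have hCd : (1/α)*(u^2 + v^2) ≤ α*(x^2 + y^2) := by
    rw [div_mul_eq_mul_div, one_mul, div_le_iff₀ hαpos]
    nlinarith [hs]
  have hD : (1/4)*(u^2 + v^2) ≤ (1/128)*(α*(x^2 + y^2)) := by
    have hαsq : α^2 ≤ α/32 := by nlinarith [mul_le_mul_of_nonneg_left hαle hαpos.le]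
    have h0 : 0 ≤ x^2 + y^2 := by positivity
    linarith [hs, mul_le_mul_of_nonneg_right hαsq h0]
  have hv : v^2 ≤ u^2 + v^2 := by nlinarith [sq_nonneg u]
  have main : (ψ ζ (-ζ/(γ:ℂ) - conj ζ + c)).re ≤ -(3 * α * ‖ζ‖^2) := by
    rw [hre, hn]
    nlinarith [hA, hB, hCd, hD, hv, h32, sq_nonneg (g*x),
      mul_nonneg (mul_nonneg hαpos.le hg0.le) (sq_nonneg x),
      mul_nonneg (mul_nonneg hαpos.le (by linarith : (0:ℝ) ≤ 2 - g)) (sq_nonneg y),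
      mul_nonneg hαpos.le (sq_nonneg x), mul_nonneg hαpos.le (sq_nonneg y)]
  refine ⟨main, ?_, ?_⟩
  · have : 0 ≤ 3 * α * ‖ζ‖^2 := by positivity
    linarith
  · intro h0
    have h1 : 3 * α * ‖ζ‖^2 ≤ 0 := by linarith [main, h0.symm.le]
    have h2 : ‖ζ‖^2 ≤ 0 := by nlinarith
    have : ‖ζ‖ = 0 := by nlinarith [norm_nonneg ζ, sq_nonneg ‖ζ‖]
    exact norm_eq_zero.mp this
end
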